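/- Let f : ℝ × ℝ → ℝ be 1-periodic in the first variable and satisfy the L¹-Carathéodory conditions on [0,1] × ℝ. Suppose the equation x' = f(t,x) admits a subharmonic solution of order m for some integer m > 1, i.e. there exist a Carathéodory solution x and an integer m ≥ 2 with x(t+m) = x(t) for all t ∈ ℝ and x(t₁+1) ≠ x(t₁) for some t₁ ∈ ℝ. Then for every integer n ≥ 1 there exists a Carathéodory solution xₙ of x' = f(t,x) with xₙ(t+n) = xₙ(t) for all t ∈ ℝ and such that no integer k with 1 ≤ k < n satisfies xₙ(t+k) = xₙ(t) for all t ∈ ℝ. -/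

import Mathlib

open MeasureTheory Set

/-- `x` is a Carathéodory solution of `x' = f(t,x)`: a continuous function satisfying
the associated integral equation. -/
def IsCaratheodorySolution (f : ℝ × ℝ → ℝ) (x : ℝ → ℝ) : Prop :=
  Continuous x ∧ ∀ t : ℝ, x t = x 0 + ∫ s in (0:ℝ)..t, f (s, x s)

section Aux

variable {f : ℝ × ℝ → ℝ}

private lemma fper_int (hper : ∀ t x : ℝ, f (t + 1, x) = f (t, x)) :
    ∀ (j : ℤ) (t xx : ℝ), f (t + j, xx) = f (t, xx) := by
  intro j
  induction j using Int.induction_on with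
  | zero => simp
  | succ k ih =>
      intro t xx
      push_cast
      have h1 : t + ((k:ℝ) + 1) = (t + k) + 1 := by ring
      rw [h1, hper (t + k) xx]
      have := ih t xx; push_cast at this; exact this
  | pred k ih =>
      intro t xx
      push_cast
      have h2 := hper (t + (-(k:ℝ) - 1)) xx
      have h1 : t + (-(k:ℝ) - 1) + 1 = t + (-(k:ℝ)) := by ring
      rw [h1] at h2
      have h3 := ih t xx; push_cast at h3
      exact h2.symm.trans h3

end Aux

section Core

variable {f : ℝ × ℝ → ℝ}
  (hper : ∀ t x : ℝ, f (t + 1, x) = f (t, x))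
  (hmeas : ∀ x : ℝ, Measurable fun t => f (t, x))
  (hcont : ∀ᵐ t ∂(volume.restrict (Set.Icc (0:ℝ) 1)), Continuous fun x => f (t, x))
  (hbound : ∀ r : ℝ, 0 < r → ∃ g : ℝ → ℝ, IntegrableOn g (Set.Icc (0:ℝ) 1) ∧
      ∀ᵐ t ∂(volume.restrict (Set.Icc (0:ℝ) 1)), ∀ x : ℝ, |x| ≤ r → |f (t, x)| ≤ g t)

include hper hmeas hcont in
private lemma aemeas_comp {q : ℝ → ℝ} (hq : Continuous q) :
    AEMeasurable (fun s => f (s, q s)) volume := by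
  -- a.e. slice continuity on all of ℝ
  have hcont' : ∀ᵐ t : ℝ, Continuous fun xx => f (t, xx) := by
    set A := {t : ℝ | Continuous fun xx => f (t, xx)} with hA
    have h01 : volume ({t : ℝ | ¬ Continuous fun xx => f (t, xx)} ∩ Icc (0:ℝ) 1) = 0 := by
      have h := hcont
      rw [ae_iff] at h
      rwa [Measure.restrict_apply' measurableSet_Icc] at h
    have hAinv : ∀ (j : ℤ) (t : ℝ), (t - j) ∈ A → t ∈ A := by
      intro j t ht
      have : (fun xx => f (t, xx)) = fun xx => f (t - j, xx) := by
        funext xx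
        have := fper_int hper j (t - j) xx
        rw [show t - (j:ℝ) + (j:ℝ) = t by ring] at this
        exact this
      simpa [hA, this] using ht
    have hj : ∀ j : ℤ, volume (Aᶜ ∩ Icc (j:ℝ) (j+1)) = 0 := by
      intro j
      have hsub : Aᶜ ∩ Icc (j:ℝ) (j+1) ⊆
          (fun t : ℝ => -(j:ℝ) + t) ⁻¹' ({t : ℝ | ¬ Continuous fun xx => f (t, xx)} ∩ Icc 0 1) := by
        rintro t ⟨ht, h1, h2⟩
        constructor
        · intro hcontra
          exact ht (hAinv j t (by show Continuous fun xx => f (t - (j:ℝ), xx); simpa [add_comm, sub_eq_add_neg] using hcontra))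
        · constructor
          · simp only [mem_Icc] at *; linarith
          · simp only [mem_Icc] at *; linarith
      refine measure_mono_null hsub ?_
      rw [measure_preimage_add volume (-(j:ℝ)) _]
      exact h01
    have hAc : volume Aᶜ = 0 := by
      have hcover : Aᶜ ⊆ ⋃ j : ℤ, Aᶜ ∩ Icc (j:ℝ) (j+1) := by
        intro t ht
        exact mem_iUnion.2 ⟨⌊t⌋, ht, Int.floor_le t, (Int.lt_floor_add_one t).le⟩
      exact measure_mono_null hcover (measure_iUnion_null hj)
    rw [ae_iff]
    exact hAc
  -- dyadic approximations
  have approx_meas : ∀ N : ℕ,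
      Measurable (fun s : ℝ => f (s, q ((⌊s * 2^N⌋ : ℤ) / 2^N))) := by
    intro N
    have h1 : Measurable (fun p : ℝ × ℤ => f (p.1, q ((p.2 : ℝ) / 2^N))) :=
      measurable_from_prod_countable_left (fun k => by simpa using hmeas (q ((k:ℝ) / 2^N)))
    have h2 : Measurable (fun s : ℝ => (s, ⌊s * 2^N⌋) : ℝ → ℝ × ℤ) :=
      measurable_id.prodMk ((measurable_id.mul_const ((2:ℝ)^N)).floor)
    exact h1.comp h2
  apply aemeasurable_of_tendsto_metrizable_ae' (fun N => (approx_meas N).aemeasurable)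
  filter_upwards [hcont'] with s hs
  have htend : Filter.Tendsto (fun N : ℕ => ((⌊s * 2^N⌋ : ℤ) : ℝ) / 2^N) Filter.atTop (nhds s) := by
    have hbound2 : ∀ N : ℕ, |((⌊s * 2^N⌋ : ℤ) : ℝ) / 2^N - s| ≤ (1/2)^N := by
      intro N
      have h2 : (0:ℝ) < 2^N := by positivity
      have l1 := Int.floor_le (s * 2^N)
      have l2 := Int.lt_floor_add_one (s * 2^N)
      have e1 : ((⌊s * 2^N⌋ : ℤ) : ℝ) / 2^N - s = (((⌊s * 2^N⌋ : ℤ) : ℝ) - s * 2^N) / 2^N := by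
        field_simp
      rw [e1, abs_div, abs_of_pos h2]
      have e2 : |((⌊s * 2^N⌋ : ℤ) : ℝ) - s * 2^N| ≤ 1 := by
        rw [abs_le]; constructor <;> linarith
      rw [div_pow, one_pow]
      gcongr
    have h0 : Filter.Tendsto (fun N : ℕ => ((1:ℝ)/2)^N) Filter.atTop (nhds 0) := by
      apply tendsto_pow_atTop_nhds_zero_of_lt_one <;> norm_num
    rw [Metric.tendsto_atTop]
    intro ε hε
    rw [Metric.tendsto_atTop] at h0
    obtain ⟨Nn, hNn⟩ := h0 ε hε
    refine ⟨Nn, fun n hn => ?_⟩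
    have := hNn n hn
    simp only [Real.dist_eq, sub_zero] at *
    calc |((⌊s * 2^n⌋ : ℤ) : ℝ) / 2^n - s| ≤ (1/2)^n := hbound2 n
      _ ≤ |(1/2:ℝ)^n| := le_abs_self _
      _ < ε := this
  exact (hs.tendsto (q s)).comp ((hq.tendsto s).comp htend)

include hper hmeas hcont hbound in
private lemma integ_all {q : ℝ → ℝ} (hq : Continuous q) (a b : ℝ) :
    IntervalIntegrable (fun s => f (s, q s)) volume a b := by
  have hae := aemeas_comp hper hmeas hcont hq
  -- integrability on each integer interval
  have key : ∀ j : ℤ, IntervalIntegrable (fun s => f (s, q s)) volume (j:ℝ) ((j:ℝ)+1) := by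
    intro j
    obtain ⟨C, hC⟩ := (isCompact_Icc (a := (j:ℝ)) (b := (j:ℝ)+1)).exists_bound_of_continuousOn
      hq.continuousOn
    set r := max C 1 with hr
    have hrpos : (0:ℝ) < r := lt_of_lt_of_le one_pos (le_max_right C 1)
    obtain ⟨g, hg_int, hg_bd⟩ := hbound r hrpos
    -- null set of bad points in [0,1]
    have h01 : volume ({t : ℝ | ¬ ∀ xx : ℝ, |xx| ≤ r → |f (t, xx)| ≤ g t} ∩ Icc (0:ℝ) 1) = 0 := by
      have h := hg_bd
      rw [ae_iff] at h
      rwa [Measure.restrict_apply' measurableSet_Icc] at h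
    -- translated null set
    have hnull2 : volume ({t : ℝ | ¬ ∀ xx : ℝ, |xx| ≤ r → |f (t, xx)| ≤ g (t - j)}
        ∩ Icc (j:ℝ) ((j:ℝ)+1)) = 0 := by
      have hsub : {t : ℝ | ¬ ∀ xx : ℝ, |xx| ≤ r → |f (t, xx)| ≤ g (t - j)} ∩ Icc (j:ℝ) ((j:ℝ)+1) ⊆
          (fun t : ℝ => -(j:ℝ) + t) ⁻¹'
            ({t : ℝ | ¬ ∀ xx : ℝ, |xx| ≤ r → |f (t, xx)| ≤ g t} ∩ Icc (0:ℝ) 1) := by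
        rintro t ⟨ht, h1, h2⟩
        constructor
        · intro hcontra
          apply ht
          intro xx hxx
          have hfeq : f (t, xx) = f (-(j:ℝ) + t, xx) := by
            have := fper_int hper j (-(j:ℝ) + t) xx
            rw [show -(j:ℝ) + t + (j:ℝ) = t by ring] at this
            exact this
          rw [hfeq, show t - (j:ℝ) = -(j:ℝ) + t by ring]
          exact hcontra xx hxx
        · constructor
          · simp only [mem_Icc] at *; linarith
          · simp only [mem_Icc] at *; linarith
      refine measure_mono_null hsub ?_
      rw [measure_preimage_add volume (-(j:ℝ)) _]
      exact h01
    -- dominating function integrable on the translated interval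
    have hg_ii : IntervalIntegrable g volume 0 1 := by
      rw [intervalIntegrable_iff, uIoc_of_le (by norm_num : (0:ℝ) ≤ 1)]
      exact hg_int.mono_set Ioc_subset_Icc_self
    have hG_ii : IntervalIntegrable (fun t => g (t - j)) volume (j:ℝ) ((j:ℝ)+1) := by
      have := hg_ii.comp_sub_right (j:ℝ)
      simpa [add_comm] using this
    rw [intervalIntegrable_iff, uIoc_of_le (by linarith : (j:ℝ) ≤ (j:ℝ)+1)]
    rw [intervalIntegrable_iff, uIoc_of_le (by linarith : (j:ℝ) ≤ (j:ℝ)+1)] at hG_ii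
    apply Integrable.mono' hG_ii
    · exact (hae.restrict).aestronglyMeasurable
    · rw [ae_iff, Measure.restrict_apply' measurableSet_Ioc]
      refine measure_mono_null ?_ hnull2
      rintro t ⟨ht, h1⟩
      refine ⟨?_, Ioc_subset_Icc_self h1⟩
      intro hall
      apply ht
      have hqb : |q t| ≤ r := le_trans (by simpa using hC t (Ioc_subset_Icc_self h1))
        (le_max_left C 1)
      simpa [Real.norm_eq_abs] using hall (q t) hqb
  -- trans over integer intervals
  have key2 : ∀ (jlo : ℤ) (len : ℕ),
      IntervalIntegrable (fun s => f (s, q s)) volume (jlo:ℝ) ((jlo:ℝ) + len) := by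
    intro jlo len
    induction len with
    | zero => simp
    | succ k ih =>
        have h1 := key (jlo + k)
        push_cast at h1
        have : ((jlo:ℝ) + (k+1)) = ((jlo:ℝ) + k) + 1 := by ring
        rw [show ((k:ℝ)+1 : ℝ) = ((k+1 : ℕ) : ℝ) by push_cast; ring] at this
        rw [this]
        exact ih.trans (by convert h1 using 2 <;> push_cast <;> ring)
  -- general interval
  set jlo : ℤ := ⌊min a b⌋ with hjlo
  have h1 : (jlo:ℝ) ≤ min a b := Int.floor_le _
  set len : ℕ := (⌈max a b - (jlo:ℝ)⌉).toNat with hlen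
  have h2 : max a b ≤ (jlo:ℝ) + len := by
    have h3 : max a b - (jlo:ℝ) ≤ ((⌈max a b - (jlo:ℝ)⌉ : ℤ) : ℝ) := Int.le_ceil _
    have h4 : (0:ℤ) ≤ ⌈max a b - (jlo:ℝ)⌉ := by
      apply Int.ceil_nonneg
      have : min a b ≤ max a b := min_le_max
      linarith
    have h5 : ((len:ℤ):ℝ) = ((⌈max a b - (jlo:ℝ)⌉ : ℤ):ℝ) := by
      rw [hlen, Int.toNat_of_nonneg h4]
    push_cast at h5
    linarith
  apply (key2 jlo len).mono_set
  rw [uIcc_of_le (by linarith [min_le_max (a := a) (b := b)] : (jlo:ℝ) ≤ (jlo:ℝ) + len)]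
  intro t ht
  rw [mem_uIcc] at ht
  simp only [mem_Icc]
  rcases ht with ⟨hl, hr⟩ | ⟨hl, hr⟩
  · constructor
    · linarith [min_le_left a b, h1]
    · linarith [le_max_right a b]
  · constructor
    · linarith [min_le_right a b, h1]
    · linarith [le_max_left a b]

include hper hmeas hcont hbound in
private lemma sol_diff {q : ℝ → ℝ} (hq : IsCaratheodorySolution f q) (a b : ℝ) :
    q b - q a = ∫ s in a..b, f (s, q s) := by
  have h1 := hq.2 a
  have h2 := hq.2 b
  have h3 := intervalIntegral.integral_add_adjacent_intervals
    (integ_all hper hmeas hcont hbound hq.1 0 a) (integ_all hper hmeas hcont hbound hq.1 a b)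
  linarith

include hper hmeas hcont hbound in
private lemma sol_shift {q : ℝ → ℝ} (hq : IsCaratheodorySolution f q) (j : ℤ) :
    IsCaratheodorySolution f (fun t => q (t + j)) := by
  have hqc : Continuous fun t : ℝ => q (t + j) := hq.1.comp (continuous_id.add continuous_const)
  refine ⟨hqc, fun t => ?_⟩
  have e1 : (fun s : ℝ => f (s, q (s + j))) = fun s => (fun u => f (u, q u)) (s + (j:ℝ)) := by
    funext s
    exact (fper_int hper j s (q (s + j))).symm
  rw [e1, intervalIntegral.integral_comp_add_right (fun u => f (u, q u)) (j:ℝ)]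
  have hd := sol_diff hper hmeas hcont hbound hq (0 + (j:ℝ)) (t + j)
  simp only [zero_add] at *
  linarith

include hper hmeas hcont hbound in
private lemma sol_glue {q₁ q₂ : ℝ → ℝ} (hq₁ : IsCaratheodorySolution f q₁)
    (hq₂ : IsCaratheodorySolution f q₂) (c : ℝ) (hc : q₁ c = q₂ c) :
    IsCaratheodorySolution f (fun t => if t ≤ c then q₁ t else q₂ t) := by
  classical
  set q : ℝ → ℝ := fun t => if t ≤ c then q₁ t else q₂ t with hqdef
  have hqc : Continuous q := by
    apply Continuous.if_le hq₁.1 hq₂.1 continuous_id continuous_const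
    intro t ht
    simp only [id] at ht
    rw [ht]; exact hc
  have hEq1 : EqOn q q₁ (Iic c) := fun t ht => if_pos ht
  have hEq2 : EqOn q q₂ (Ici c) := by
    intro t ht
    by_cases h : t ≤ c
    · have he : t = c := le_antisymm h ht
      simp only [hqdef, he, if_pos le_rfl, hc]
    · simp only [hqdef, if_neg h]
  have part1 : ∀ a b, a ≤ b → b ≤ c → q b - q a = ∫ s in a..b, f (s, q s) := by
    intro a b hab hbc
    have hsub : uIcc a b ⊆ Iic c := by
      rw [uIcc_of_le hab]; exact fun s hs => le_trans hs.2 hbc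
    rw [intervalIntegral.integral_congr (g := fun s => f (s, q₁ s))
      (fun s hs => by rw [hEq1 (hsub hs)])]
    rw [hEq1 (le_trans hab hbc : a ∈ Iic c), hEq1 (hbc : b ∈ Iic c)]
    exact sol_diff hper hmeas hcont hbound hq₁ a b
  have part2 : ∀ a b, a ≤ b → c ≤ a → q b - q a = ∫ s in a..b, f (s, q s) := by
    intro a b hab hca
    have hsub : uIcc a b ⊆ Ici c := by
      rw [uIcc_of_le hab]; exact fun s hs => le_trans hca hs.1
    rw [intervalIntegral.integral_congr (g := fun s => f (s, q₂ s))
      (fun s hs => by rw [hEq2 (hsub hs)])]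
    rw [hEq2 (hca : a ∈ Ici c), hEq2 (le_trans hca hab : b ∈ Ici c)]
    exact sol_diff hper hmeas hcont hbound hq₂ a b
  have key : ∀ a b, a ≤ b → q b - q a = ∫ s in a..b, f (s, q s) := by
    intro a b hab
    rcases le_or_gt b c with hbc | hbc
    · exact part1 a b hab hbc
    rcases le_or_gt c a with hca | hca
    · exact part2 a b hab hca
    · have h1 := part1 a c hca.le le_rfl
      have h2 := part2 c b hbc.le le_rfl
      have h3 := intervalIntegral.integral_add_adjacent_intervals
        (integ_all hper hmeas hcont hbound hqc a c) (integ_all hper hmeas hcont hbound hqc c b)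
      linarith
  refine ⟨hqc, fun t => ?_⟩
  rcases le_total 0 t with h | h
  · have := key 0 t h; linarith
  · have := key t 0 h
    rw [intervalIntegral.integral_symm] at this
    linarith

include hper hmeas hcont hbound in
private lemma sol_periodize {q : ℝ → ℝ} (hq : IsCaratheodorySolution f q) (a : ℝ) (T : ℤ)
    (hT : 0 < T) (hqa : q (a + T) = q a) :
    ∃ Q : ℝ → ℝ, IsCaratheodorySolution f Q ∧ (∀ (j : ℤ) (t : ℝ), Q (t + j * T) = Q t) ∧
      (∀ (j : ℤ) (t : ℝ), t ∈ Icc (a + j * T) (a + (j + 1) * T) → Q t = q (t - j * T)) := by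
  have hTR : (0:ℝ) < (T:ℝ) := by exact_mod_cast hT
  set J : ℝ → ℤ := fun t => ⌊(t - a) / (T:ℝ)⌋ with hJdef
  set Q : ℝ → ℝ := fun t => q (t - (J t) * (T:ℝ)) with hQdef
  have hJ1 : ∀ t, a + (J t : ℝ) * T ≤ t := by
    intro t
    have h0 : ((J t : ℝ)) ≤ (t - a) / (T:ℝ) := Int.floor_le _
    have h3 := mul_le_mul_of_nonneg_right h0 hTR.le
    rw [div_mul_cancel₀ _ (ne_of_gt hTR)] at h3
    linarith
  have hJ2 : ∀ t, t < a + ((J t : ℝ) + 1) * T := by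
    intro t
    have h0 : (t - a) / (T:ℝ) < (J t : ℝ) + 1 := Int.lt_floor_add_one _
    have h3 := (div_lt_iff₀ hTR).mp h0
    linarith
  have hJeq : ∀ (j : ℤ) (t : ℝ), a + (j:ℝ) * T ≤ t → t < a + ((j:ℝ) + 1) * T → J t = j := by
    intro j t h1 h2
    show ⌊(t - a) / (T:ℝ)⌋ = j
    rw [Int.floor_eq_iff]
    constructor
    · rw [le_div_iff₀ hTR]; linarith
    · rw [div_lt_iff₀ hTR]; push_cast; linarith
  have hF3 : ∀ (j : ℤ) (t : ℝ), t ∈ Icc (a + (j:ℝ) * T) (a + ((j:ℝ) + 1) * T) →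
      Q t = q (t - j * T) := by
    rintro j t ⟨h1, h2⟩
    rcases lt_or_eq_of_le h2 with h2' | h2'
    · show q (t - (J t : ℝ) * T) = q (t - (j:ℝ) * T)
      rw [hJeq j t h1 h2']
    · have hJt : J t = j + 1 := by
        apply hJeq
        · push_cast; rw [h2']
        · push_cast; nlinarith
      show q (t - (J t : ℝ) * T) = q (t - (j:ℝ) * T)
      rw [hJt]
      push_cast
      rw [show t - ((j:ℝ) + 1) * T = a from by rw [h2']; ring,
        show t - (j:ℝ) * T = a + T from by rw [h2']; ring, hqa]
  have hQper : ∀ (j : ℤ) (t : ℝ), Q (t + j * T) = Q t := by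
    intro j t
    have hJshift : J (t + (j:ℝ) * T) = J t + j := by
      show ⌊(t + (j:ℝ) * T - a) / (T:ℝ)⌋ = ⌊(t - a) / (T:ℝ)⌋ + j
      rw [show (t + (j:ℝ) * T - a) / (T:ℝ) = (t - a) / (T:ℝ) + (j:ℝ) from by
        field_simp; ring]
      exact Int.floor_add_intCast _ _
    show q (t + (j:ℝ) * T - (J (t + (j:ℝ) * T) : ℝ) * T) = q (t - (J t : ℝ) * T)
    rw [hJshift]
    congr 1
    push_cast
    ring
  have hQa : ∀ (i : ℤ), Q (a + (i:ℝ) * T) = Q a := fun i => hQper i a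
  -- continuity
  have hQcont : Continuous Q := by
    have h_lf : LocallyFinite (fun j : ℤ => Icc (a + (j:ℝ) * T) (a + ((j:ℝ) + 1) * T)) := by
      intro t
      refine ⟨Ioo (t - T) (t + T), Ioo_mem_nhds (by linarith) (by linarith), ?_⟩
      apply Set.Finite.subset (Set.finite_Icc (J t - 2) (J t + 2))
      rintro j ⟨s, ⟨hs1, hs2⟩, hs3, hs4⟩
      have hb1 : a + (J t : ℝ) * T ≤ t := hJ1 t
      have hb2 : t < a + ((J t : ℝ) + 1) * T := hJ2 t
      simp only [Finset.coe_Icc, mem_Icc]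
      constructor
      · have hlt : ((J t : ℝ) - 2) * T < (j:ℝ) * T := by nlinarith
        have h5 : ((J t : ℝ) - 2) < (j:ℝ) := lt_of_mul_lt_mul_right hlt hTR.le
        have h6 : (J t : ℤ) - 2 < j := by exact_mod_cast h5
        omega
      · have hlt : ((j:ℝ)) * T < ((J t : ℝ) + 2) * T := by nlinarith
        have h5 : (j:ℝ) < ((J t : ℝ) + 2) := lt_of_mul_lt_mul_right hlt hTR.le
        have h6 : j < (J t : ℤ) + 2 := by exact_mod_cast h5
        omega
    apply h_lf.continuous
    · apply Set.iUnion_eq_univ_iff.mpr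
      intro t
      exact ⟨J t, hJ1 t, (hJ2 t).le⟩
    · intro j; exact isClosed_Icc
    · intro j
      have hc2 : ContinuousOn (fun t : ℝ => q (t - (j:ℝ) * T))
          (Icc (a + (j:ℝ) * T) (a + ((j:ℝ) + 1) * T)) :=
        (hq.1.comp (continuous_id.sub continuous_const)).continuousOn
      exact hc2.congr (hF3 j)
  -- difference identity inside one block
  have hsame : ∀ (j : ℤ) (t₁ t₂ : ℝ), t₁ ∈ Icc (a + (j:ℝ) * T) (a + ((j:ℝ) + 1) * T) →
      t₂ ∈ Icc (a + (j:ℝ) * T) (a + ((j:ℝ) + 1) * T) →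
      Q t₂ - Q t₁ = ∫ s in t₁..t₂, f (s, Q s) := by
    intro j t₁ t₂ h1 h2
    set qj : ℝ → ℝ := fun t => q (t + ((-(j * T) : ℤ) : ℝ)) with hqjdef
    have hqj : IsCaratheodorySolution f qj := sol_shift hper hmeas hcont hbound hq (-(j * T))
    have heq : EqOn Q qj (Icc (a + (j:ℝ) * T) (a + ((j:ℝ) + 1) * T)) := by
      intro s hs
      rw [hF3 j s hs]
      show q (s - (j:ℝ) * T) = q (s + ((-(j * T) : ℤ) : ℝ))
      congr 1
      push_cast
      ring
    have hsub : uIcc t₁ t₂ ⊆ Icc (a + (j:ℝ) * T) (a + ((j:ℝ) + 1) * T) := by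
      intro s hs
      rw [mem_uIcc] at hs
      simp only [mem_Icc] at *
      rcases hs with ⟨u1, u2⟩ | ⟨u1, u2⟩
      · exact ⟨le_trans h1.1 u1, le_trans u2 h2.2⟩
      · exact ⟨le_trans h2.1 u1, le_trans u2 h1.2⟩
    rw [intervalIntegral.integral_congr (g := fun s => f (s, qj s))
      (fun s hs => by rw [heq (hsub hs)])]
    rw [heq (hsub left_mem_uIcc), heq (hsub right_mem_uIcc)]
    exact sol_diff hper hmeas hcont hbound hqj t₁ t₂
  -- boundary integral over k blocks is zero
  set u : ℤ → ℝ := fun i => a + (i:ℝ) * T with hu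
  have hu1 : ∀ i : ℤ, u (i + 1) = a + ((i:ℝ) + 1) * T := by
    intro i; simp only [hu]; push_cast; ring
  have hmem_l : ∀ (i : ℤ), u i ∈ Icc (a + (i:ℝ) * T) (a + ((i:ℝ) + 1) * T) := by
    intro i; simp only [hu, mem_Icc]; constructor
    · linarith
    · nlinarith
  have hmem_r : ∀ (i : ℤ), u (i + 1) ∈ Icc (a + (i:ℝ) * T) (a + ((i:ℝ) + 1) * T) := by
    intro i; rw [hu1 i]; simp only [mem_Icc]; constructor
    · nlinarith
    · linarith
  have humono : ∀ i i' : ℤ, i ≤ i' → u i ≤ u i' := by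
    intro i i' hii
    simp only [hu]
    have : (i:ℝ) ≤ (i':ℝ) := by exact_mod_cast hii
    nlinarith
  have hbdry : ∀ (k : ℕ) (j : ℤ), ∫ s in (u j)..(u (j + k)), f (s, Q s) = 0 := by
    intro k
    induction k with
    | zero =>
        intro j
        norm_num
    | succ k ih =>
        intro j
        have hadj := intervalIntegral.integral_add_adjacent_intervals
          (integ_all hper hmeas hcont hbound hQcont (u j) (u (j + k)))
          (integ_all hper hmeas hcont hbound hQcont (u (j + k)) (u (j + k + 1)))
        have hlast : ∫ s in (u (j + k))..(u (j + k + 1)), f (s, Q s) = 0 := by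
          have hs := hsame (j + k) (u (j + k)) (u (j + k + 1)) (hmem_l (j + k)) (hmem_r (j + k))
          have hv1 : Q (u (j + k)) = Q a := hQa (j + k)
          have hv2 : Q (u (j + k + 1)) = Q a := hQa (j + k + 1)
          rw [hv1, hv2] at hs
          rw [← hs]; ring
        have hik := ih j
        rw [show (j + (k:ℤ) + 1) = (j + ((k+1 : ℕ) : ℤ)) from by push_cast; ring] at hlast hadj
        rw [← hadj, hik, hlast, zero_add]
  -- general difference identity
  have hdiff0 : ∀ t₁ t₂ : ℝ, t₁ ≤ t₂ → Q t₂ - Q t₁ = ∫ s in t₁..t₂, f (s, Q s) := by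
    intro t₁ t₂ h12
    have hj12 : J t₁ ≤ J t₂ := by
      apply Int.floor_le_floor
      gcongr
    have hmem1 : t₁ ∈ Icc (a + ((J t₁ : ℤ) : ℝ) * T) (a + (((J t₁ : ℤ) : ℝ) + 1) * T) :=
      ⟨hJ1 t₁, (hJ2 t₁).le⟩
    have hmem2 : t₂ ∈ Icc (a + ((J t₂ : ℤ) : ℝ) * T) (a + (((J t₂ : ℤ) : ℝ) + 1) * T) :=
      ⟨hJ1 t₂, (hJ2 t₂).le⟩
    rcases eq_or_lt_of_le hj12 with hjj | hjj
    · apply hsame (J t₁) t₁ t₂ hmem1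
      rw [hjj]
      exact hmem2
    · set b₁ := u (J t₁ + 1) with hb₁
      set b₂ := u (J t₂) with hb₂
      have hs1 : Q b₁ - Q t₁ = ∫ s in t₁..b₁, f (s, Q s) :=
        hsame (J t₁) t₁ b₁ hmem1 (hmem_r (J t₁))
      have hs2 : Q t₂ - Q b₂ = ∫ s in b₂..t₂, f (s, Q s) :=
        hsame (J t₂) b₂ t₂ (hmem_l (J t₂)) hmem2
      have hs3 : ∫ s in b₁..b₂, f (s, Q s) = 0 := by
        have hk : (J t₁ + 1) + ((J t₂ - (J t₁ + 1)).toNat : ℤ) = J t₂ := by omega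
        have := hbdry (J t₂ - (J t₁ + 1)).toNat (J t₁ + 1)
        rwa [hk] at this
      have hadj1 := intervalIntegral.integral_add_adjacent_intervals
        (integ_all hper hmeas hcont hbound hQcont t₁ b₁)
        (integ_all hper hmeas hcont hbound hQcont b₁ b₂)
      have hadj2 := intervalIntegral.integral_add_adjacent_intervals
        (integ_all hper hmeas hcont hbound hQcont t₁ b₂)
        (integ_all hper hmeas hcont hbound hQcont b₂ t₂)
      have hv1 : Q b₁ = Q a := hQa (J t₁ + 1)
      have hv2 : Q b₂ = Q a := hQa (J t₂)
      rw [← hadj2, ← hadj1, hs3, add_zero, ← hs1, ← hs2, hv1, hv2]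
      ring
  refine ⟨Q, ⟨hQcont, fun t => ?_⟩, hQper, hF3⟩
  rcases le_total 0 t with h | h
  · have := hdiff0 0 t h; linarith
  · have := hdiff0 t 0 h
    rw [intervalIntegral.integral_symm] at this
    linarith

end Core

theorem period_two_implies_all_periods_caratheodory
    (f : ℝ × ℝ → ℝ)
    (hper : ∀ t x : ℝ, f (t + 1, x) = f (t, x))
    (hmeas : ∀ x : ℝ, Measurable fun t => f (t, x))
    (hcont : ∀ᵐ t ∂(volume.restrict (Set.Icc (0:ℝ) 1)), Continuous fun x => f (t, x))
    (hbound : ∀ r : ℝ, 0 < r → ∃ g : ℝ → ℝ, IntegrableOn g (Set.Icc (0:ℝ) 1) ∧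
      ∀ᵐ t ∂(volume.restrict (Set.Icc (0:ℝ) 1)), ∀ x : ℝ, |x| ≤ r → |f (t, x)| ≤ g t)
    (x : ℝ → ℝ) (m : ℕ) (hm : 2 ≤ m)
    (hx : IsCaratheodorySolution f x)
    (hxm : ∀ t : ℝ, x (t + m) = x t)
    (t₁ : ℝ) (ht₁ : x (t₁ + 1) ≠ x t₁) :
    ∀ n : ℕ, 1 ≤ n → ∃ xn : ℝ → ℝ, IsCaratheodorySolution f xn ∧
      (∀ t : ℝ, xn (t + n) = xn t) ∧
      ∀ k : ℕ, 1 ≤ k → k < n → ¬ (∀ t : ℝ, xn (t + k) = xn t) := by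
  intro n hn
  have hxc := hx.1
  have hmR : (2:ℝ) ≤ (m:ℝ) := by exact_mod_cast hm
  -- x is periodic with period j*m for every integer j
  have hxmZ : ∀ (j : ℤ) (t : ℝ), x (t + j * m) = x t := by
    intro j
    induction j using Int.induction_on with
    | zero => simp
    | succ k ih =>
        intro t
        have e : t + (((k:ℤ)+1 : ℤ) : ℝ) * m = (t + (k:ℤ) * m) + m := by push_cast; ring
        rw [e, hxm, ih]
    | pred k ih =>
        intro t
        have e : (t + ((-(k:ℤ)-1 : ℤ) : ℝ) * m) + m = t + ((-(k:ℤ) : ℤ) : ℝ) * m := by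
          push_cast; ring
        have h2 := hxm (t + ((-(k:ℤ)-1 : ℤ) : ℝ) * m)
        rw [e] at h2
        rw [← ih t, ← h2]
  -- the displacement function and a zero of it
  set hfun : ℝ → ℝ := fun t => x (t + 1) - x t with hhdef
  have hhc : Continuous hfun := (hxc.comp (continuous_id.add continuous_const)).sub hxc
  have hht₁ : hfun t₁ ≠ 0 := sub_ne_zero.mpr ht₁
  have hsum0 : ∑ k ∈ Finset.range m, hfun (t₁ + k) = 0 := by
    have e1 : ∀ k : ℕ, hfun (t₁ + k) = x (t₁ + (k+1 : ℕ)) - x (t₁ + k) := by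
      intro k
      simp only [hhdef]
      congr 2
      push_cast; ring
    calc ∑ k ∈ Finset.range m, hfun (t₁ + k)
        = ∑ k ∈ Finset.range m, (x (t₁ + (k+1 : ℕ)) - x (t₁ + k)) := by
          apply Finset.sum_congr rfl; intro k _; exact e1 k
      _ = x (t₁ + m) - x (t₁ + (0:ℕ)) := Finset.sum_range_sub (fun k : ℕ => x (t₁ + k)) m
      _ = 0 := by rw [hxm]; simp
  obtain ⟨γ, hγ⟩ : ∃ γ, hfun γ = 0 := by
    have hIVT : ∀ s t : ℝ, hfun s < 0 → 0 < hfun t → ∃ γ, hfun γ = 0 := by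
      intro s t hs ht
      have hmem : (0:ℝ) ∈ uIcc (hfun s) (hfun t) := by
        rw [mem_uIcc]; left; exact ⟨hs.le, ht.le⟩
      obtain ⟨γ, _, hγ0⟩ := intermediate_value_uIcc hhc.continuousOn hmem
      exact ⟨γ, hγ0⟩
    rcases lt_or_gt_of_ne hht₁ with hneg | hpos
    · -- some positive term exists
      have : ∃ k ∈ Finset.range m, 0 < hfun (t₁ + k) := by
        by_contra hcon
        push_neg at hcon
        have h0mem : (0:ℕ) ∈ Finset.range m := by simp; omega
        have hkey := Finset.single_le_sum (f := fun k:ℕ => - hfun (t₁ + k))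
          (fun k hk => by simpa using neg_nonneg.mpr (hcon k hk)) h0mem
        have hsum' : ∑ k ∈ Finset.range m, (- hfun (t₁ + k)) = 0 := by
          rw [Finset.sum_neg_distrib, hsum0, neg_zero]
        rw [hsum'] at hkey
        simp only [Nat.cast_zero, add_zero] at hkey
        linarith
      obtain ⟨k, _, hk⟩ := this
      exact hIVT t₁ (t₁ + k) (by simpa using hneg) hk
    · have : ∃ k ∈ Finset.range m, hfun (t₁ + k) < 0 := by
        by_contra hcon
        push_neg at hcon
        have h0mem : (0:ℕ) ∈ Finset.range m := by simp; omega
        have := Finset.single_le_sum (f := fun k:ℕ => hfun (t₁ + k)) (fun k hk => hcon k hk) h0mem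
        rw [hsum0] at this
        simp only [Nat.cast_zero, add_zero] at this
        linarith
      obtain ⟨k, _, hk⟩ := this
      exact hIVT (t₁ + k) t₁ hk (by simpa using hpos)
  -- the basic 1-periodic solution Z
  obtain ⟨Z, hZsol, hZper, hZF3⟩ := sol_periodize hper hmeas hcont hbound hx γ 1 one_pos
    (by
      have : x (γ + 1) = x γ := by
        have := hγ; simp only [hhdef] at this; linarith
      simpa using this)
  have hZper1 : ∀ (j : ℤ) (t : ℝ), Z (t + j) = Z t := by
    intro j t
    have := hZper j t
    simpa using this
  have hZγ : Z γ = x γ := by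
    have := hZF3 0 γ ⟨by simp, by simp⟩
    simpa using this
  -- x is not equal to Z
  obtain ⟨σ₀, hσ₀⟩ : ∃ t, x t ≠ Z t := by
    by_contra hcon
    push_neg at hcon
    apply ht₁
    have h1 := hcon (t₁ + 1)
    have h2 := hcon t₁
    have h3 : Z (t₁ + 1) = Z t₁ := by
      have := hZper1 1 t₁; simpa using this
    rw [h1, h3, ← h2]
  -- the agreement set
  set E := {t : ℝ | x t = Z t} with hEdef
  have hEclosed : IsClosed E := isClosed_eq hxc hZsol.1
  have hEγm : ∀ j : ℤ, γ + (j:ℝ) * m ∈ E := by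
    intro j
    show x (γ + (j:ℝ) * m) = Z (γ + (j:ℝ) * m)
    have h1 : x (γ + (j:ℝ) * m) = x γ := by
      have := hxmZ j γ; exact this
    have h2 : Z (γ + ((j * m : ℤ) : ℝ)) = Z γ := hZper1 (j * m) γ
    push_cast at h2
    rw [h1, h2, hZγ]
  have hmpos : (0:ℝ) < m := by linarith
  -- c and d
  obtain ⟨jd, hjd⟩ : ∃ j : ℤ, γ + (j:ℝ) * m ≤ σ₀ := by
    obtain ⟨j, hj⟩ : ∃ j : ℤ, (j:ℝ) ≤ (σ₀ - γ) / m := ⟨⌊(σ₀ - γ)/m⌋, Int.floor_le _⟩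
    refine ⟨j, ?_⟩
    have := mul_le_mul_of_nonneg_right hj hmpos.le
    rw [div_mul_cancel₀ _ (ne_of_gt hmpos)] at this
    linarith
  obtain ⟨ju, hju⟩ : ∃ j : ℤ, σ₀ ≤ γ + (j:ℝ) * m := by
    obtain ⟨j, hj⟩ : ∃ j : ℤ, (σ₀ - γ) / m ≤ (j:ℝ) := ⟨⌈(σ₀ - γ)/m⌉, Int.le_ceil _⟩
    refine ⟨j, ?_⟩
    have := mul_le_mul_of_nonneg_right hj hmpos.le
    rw [div_mul_cancel₀ _ (ne_of_gt hmpos)] at this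
    linarith
  set Sc := E ∩ Iic σ₀ with hScdef
  set Sd := E ∩ Ici σ₀ with hSddef
  set c := sSup Sc with hcdef
  set d := sInf Sd with hddef
  have hcmem : c ∈ Sc :=
    (hEclosed.inter isClosed_Iic).csSup_mem ⟨γ + (jd:ℝ) * m, hEγm jd, hjd⟩
      ⟨σ₀, fun t ht => ht.2⟩
  have hdmem : d ∈ Sd :=
    (hEclosed.inter isClosed_Ici).csInf_mem ⟨γ + (ju:ℝ) * m, hEγm ju, hju⟩
      ⟨σ₀, fun t ht => ht.2⟩
  have hcσ₀ : c < σ₀ := lt_of_le_of_ne hcmem.2 (fun he => hσ₀ (he ▸ hcmem.1))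
  have hσ₀d : σ₀ < d :=
    lt_of_le_of_ne hdmem.2 (fun he => hσ₀ (by rw [he]; exact hdmem.1))
  have hgap : ∀ t, c < t → t < d → x t ≠ Z t := by
    intro t hct htd he
    rcases le_total t σ₀ with hts | hts
    · have : t ≤ c := le_csSup ⟨σ₀, fun s hs => hs.2⟩ ⟨he, hts⟩
      linarith
    · have : d ≤ t := csInf_le ⟨σ₀, fun s hs => hs.2⟩ ⟨he, hts⟩
      linarith
  have hcd : c < d := lt_trans hcσ₀ hσ₀d
  -- jump size
  set L := d - c with hLdef
  have hL0 : 0 < L := by simp only [hLdef]; linarith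
  set kc : ℤ := ⌈L⌉ - 1 with hkcdef
  have hkc0 : 0 ≤ kc := by
    have : 1 ≤ ⌈L⌉ := Int.ceil_pos.mpr hL0
    omega
  have hkcL : (kc:ℝ) < L := by
    have := Int.ceil_lt_add_one L
    push_cast [hkcdef]
    linarith
  have hLkc : L ≤ (kc:ℝ) + 1 := by
    have := Int.le_ceil L
    push_cast [hkcdef]
    linarith
  -- sign coherence of x - Z on the gap
  set B : ℝ → ℝ := fun t => x t - Z t with hBdef
  have hBc : B c = 0 := by simp only [hBdef]; rw [hcmem.1]; ring
  have hBd : B d = 0 := by simp only [hBdef]; rw [hdmem.1]; ring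
  have hBcont : Continuous B := hxc.sub hZsol.1
  have hBne : ∀ t, c < t → t < d → B t ≠ 0 := by
    intro t h1 h2 he
    exact hgap t h1 h2 (by simp only [hBdef] at he; linarith)
  have hsign : ∀ s t, c < s → s < d → c < t → t < d → 0 < B s * B t := by
    have key : ∀ s t, s ≤ t → c < s → s < d → c < t → t < d → 0 < B s * B t := by
      intro s t hst h1 h2 h3 h4
      rcases lt_or_gt_of_ne (hBne s h1 h2) with hs | hs
      · rcases lt_or_gt_of_ne (hBne t h3 h4) with ht | ht
        · exact mul_pos_of_neg_of_neg hs ht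
        · exfalso
          have hmem : (0:ℝ) ∈ uIcc (B s) (B t) := by rw [mem_uIcc]; left; exact ⟨hs.le, ht.le⟩
          obtain ⟨w, hw, hw0⟩ := intermediate_value_uIcc hBcont.continuousOn hmem
          rw [uIcc_of_le hst] at hw
          exact hBne w (lt_of_lt_of_le h1 hw.1) (lt_of_le_of_lt hw.2 h4) hw0
      · rcases lt_or_gt_of_ne (hBne t h3 h4) with ht | ht
        · exfalso
          have hmem : (0:ℝ) ∈ uIcc (B s) (B t) := by rw [mem_uIcc]; right; exact ⟨ht.le, hs.le⟩
          obtain ⟨w, hw, hw0⟩ := intermediate_value_uIcc hBcont.continuousOn hmem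
          rw [uIcc_of_le hst] at hw
          exact hBne w (lt_of_lt_of_le h1 hw.1) (lt_of_le_of_lt hw.2 h4) hw0
        · exact mul_pos hs ht
    intro s t h1 h2 h3 h4
    rcases le_total s t with hst | hst
    · exact key s t hst h1 h2 h3 h4
    · rw [mul_comm]; exact key t s hst h3 h4 h1 h2
  -- the jump point
  obtain ⟨w, hcw, hwd, hjump⟩ : ∃ w, c < w ∧ w < d - kc ∧ x (w + kc) = x w := by
    rcases eq_or_lt_of_le hkc0 with hk0 | hk0
    · refine ⟨σ₀, hcσ₀, ?_, ?_⟩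
      · rw [← hk0]; push_cast; linarith
      · rw [← hk0]; push_cast; rw [add_zero]
    · have hkcR : (1:ℝ) ≤ (kc:ℝ) := by exact_mod_cast hk0
      set φ : ℝ → ℝ := fun u => B (u + kc) - B u with hφdef
      have hφc : φ c = B (c + kc) := by simp only [hφdef]; rw [hBc]; ring
      have hφd : φ (d - kc) = - B (d - kc) := by
        simp only [hφdef]
        rw [show d - (kc:ℝ) + kc = d from by ring, hBd]
        ring
      have hckc1 : c < c + kc := by linarith
      have hckc2 : c + (kc:ℝ) < d := by simp only [hLdef] at hkcL; linarith
      have hdkc1 : c < d - kc := by simp only [hLdef] at hkcL; linarith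
      have hdkc2 : d - (kc:ℝ) < d := by linarith
      have hprod : φ c * φ (d - kc) < 0 := by
        rw [hφc, hφd]
        have := hsign (c + kc) (d - kc) hckc1 hckc2 hdkc1 hdkc2
        nlinarith
      have hφcont : Continuous φ :=
        (hBcont.comp (continuous_id.add continuous_const)).sub hBcont
      have hivt : (0:ℝ) ∈ uIcc (φ c) (φ (d - kc))  := by
        rcases mul_neg_iff.mp hprod with ⟨h1, h2⟩ | ⟨h1, h2⟩
        · rw [mem_uIcc]; right; exact ⟨h2.le, h1.le⟩
        · rw [mem_uIcc]; left; exact ⟨h1.le, h2.le⟩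
      obtain ⟨w, hwmem, hw0⟩ := intermediate_value_uIcc hφcont.continuousOn hivt
      rw [uIcc_of_le hdkc1.le] at hwmem
      have hwc : w ≠ c := by
        intro he
        rw [he, hφc] at hw0
        exact hBne (c + kc) hckc1 hckc2 hw0
      have hwd' : w ≠ d - kc := by
        intro he
        rw [he, hφd] at hw0
        exact hBne (d - kc) hdkc1 hdkc2 (by linarith)
      refine ⟨w, lt_of_le_of_ne hwmem.1 (Ne.symm hwc), lt_of_le_of_ne hwmem.2 hwd', ?_⟩
      have hBe : B (w + kc) = B w := by simp only [hφdef] at hw0; linarith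
      have hZw : Z (w + kc) = Z w := hZper1 kc w
      simp only [hBdef] at hBe
      linarith
  -- the bump solution y
  set d' := d - (kc:ℝ) with hd'def
  have hcd' : c < d' := lt_trans hcw hwd
  have hd'd : d' ≤ d := by
    have : (0:ℝ) ≤ (kc:ℝ) := by exact_mod_cast hkc0
    simp only [hd'def]; linarith
  have hd'c1 : d' ≤ c + 1 := by simp only [hd'def, hLdef] at hLkc ⊢; linarith
  have hxkc : IsCaratheodorySolution f (fun t => x (t + kc)) :=
    sol_shift hper hmeas hcont hbound hx kc
  set y₁ : ℝ → ℝ := fun t => if t ≤ c then Z t else x t with hy₁def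
  have hy₁sol : IsCaratheodorySolution f y₁ :=
    sol_glue hper hmeas hcont hbound hZsol hx c hcmem.1.symm
  set y₂ : ℝ → ℝ := fun t => if t ≤ w then y₁ t else x (t + kc) with hy₂def
  have hy₂sol : IsCaratheodorySolution f y₂ := by
    apply sol_glue hper hmeas hcont hbound hy₁sol hxkc w
    rw [show y₁ w = x w from if_neg (not_le.mpr hcw), hjump]
  set y : ℝ → ℝ := fun t => if t ≤ d' then y₂ t else Z t with hydef
  have hy₂d' : y₂ d' = Z d' := by
    have h1 : y₂ d' = x (d' + kc) := if_neg (not_le.mpr hwd)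
    have h2 : d' + (kc:ℝ) = d := by simp only [hd'def]; ring
    have h3 : Z (d' + kc) = Z d' := hZper1 kc d'
    rw [h1, ← h3, h2, ← hdmem.1, ← h2]
  have hysol : IsCaratheodorySolution f y :=
    sol_glue hper hmeas hcont hbound hy₂sol hZsol d' hy₂d'
  -- properties of y
  have hP1 : ∀ t, t ≤ c → y t = Z t := by
    intro t ht
    have h1 : y t = y₂ t := if_pos (le_trans ht hcd'.le)
    have h2 : y₂ t = y₁ t := if_pos (le_trans ht hcw.le)
    have h3 : y₁ t = Z t := if_pos ht
    rw [h1, h2, h3]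
  have hP2 : ∀ t, d' ≤ t → y t = Z t := by
    intro t ht
    rcases eq_or_lt_of_le ht with he | hlt
    · rw [← he]
      show y d' = Z d'
      rw [show y d' = y₂ d' from if_pos le_rfl, hy₂d']
    · exact if_neg (not_le.mpr hlt)
  have hP3 : ∀ t, c < t → t < d' → y t ≠ Z t := by
    intro t h1 h2
    have hyt : y t = y₂ t := if_pos h2.le
    rcases le_or_gt t w with htw | htw
    · have h3 : y₂ t = y₁ t := if_pos htw
      have h4 : y₁ t = x t := if_neg (not_le.mpr h1)
      rw [hyt, h3, h4]
      exact hgap t h1 (lt_of_lt_of_le h2 hd'd)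
    · have h3 : y₂ t = x (t + kc) := if_neg (not_le.mpr htw)
      rw [hyt, h3]
      intro he
      have hZt : Z (t + kc) = Z t := hZper1 kc t
      apply hgap (t + kc) ?_ ?_ (by rw [hZt]; exact he)
      · have : (0:ℝ) ≤ (kc:ℝ) := by exact_mod_cast hkc0
        linarith
      · simp only [hd'def] at h2; linarith
  -- periodize with period n
  have hnR : (1:ℝ) ≤ (n:ℝ) := by exact_mod_cast hn
  have hyc : y (c + ((n:ℤ):ℝ)) = y c := by
    have h1 : y c = Z c := hP1 c le_rfl
    have h2 : y (c + ((n:ℤ):ℝ)) = Z (c + ((n:ℤ):ℝ)) := by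
      apply hP2
      push_cast
      linarith
    have h3 : Z (c + ((n:ℤ):ℝ)) = Z c := hZper1 n c
    rw [h1, h2, h3]
  obtain ⟨Q, hQsol, hQper, hQF3⟩ := sol_periodize hper hmeas hcont hbound hysol c n
    (by exact_mod_cast hn) hyc
  refine ⟨Q, hQsol, ?_, ?_⟩
  · intro t
    have := hQper 1 t
    push_cast at this
    simpa using this
  · -- no smaller integer period
    intro k₀ hk₀1 hk₀n Hc
    set G := Nat.gcd k₀ n with hGdef
    have hG1 : 1 ≤ G := Nat.succ_le_of_lt (Nat.gcd_pos_of_pos_left n (by omega))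
    have hGk₀ : G ≤ k₀ := Nat.le_of_dvd (by omega) (Nat.gcd_dvd_left k₀ n)
    have hGn : G < n := lt_of_le_of_lt hGk₀ hk₀n
    set D : ℝ → ℝ := fun t => Q t - Z t with hDdef
    have hDk : ∀ t, D (t + k₀) = D t := by
      intro t
      have h1 := Hc t
      have h2 : Z (t + ((k₀:ℤ):ℝ)) = Z t := hZper1 k₀ t
      push_cast at h2
      simp only [hDdef]
      rw [h1, h2]
    have hDn : ∀ t, D (t + n) = D t := by
      intro t
      have h1 := hQper 1 t
      push_cast at h1
      have h2 : Z (t + ((n:ℤ):ℝ)) = Z t := hZper1 n t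
      push_cast at h2
      simp only [hDdef]
      rw [← h1, h2]
      norm_num
    have hDkZ : ∀ (i : ℤ) (t : ℝ), D (t + i * k₀) = D t := by
      intro i
      induction i using Int.induction_on with
      | zero => intro t; simp
      | succ i ih =>
          intro t
          have e : t + ((i:ℤ)+1 : ℤ) * k₀ = (t + (i:ℤ) * k₀) + k₀ := by push_cast; ring
          rw [show t + (((i:ℤ)+1 : ℤ):ℝ) * k₀ = (t + ((i:ℤ):ℝ) * k₀) + k₀ from by push_cast; ring]
          rw [hDk, ih]
      | pred i ih =>
          intro t
          have h2 := hDk (t + ((-(i:ℤ)-1 : ℤ):ℝ) * k₀)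
          rw [show (t + ((-(i:ℤ)-1 : ℤ):ℝ) * k₀) + k₀ = t + ((-(i:ℤ) : ℤ):ℝ) * k₀ from by
            push_cast; ring] at h2
          rw [← ih t, ← h2]
    have hDnZ : ∀ (i : ℤ) (t : ℝ), D (t + i * n) = D t := by
      intro i
      induction i using Int.induction_on with
      | zero => intro t; simp
      | succ i ih =>
          intro t
          rw [show t + (((i:ℤ)+1 : ℤ):ℝ) * n = (t + ((i:ℤ):ℝ) * n) + n from by push_cast; ring]
          rw [hDn, ih]
      | pred i ih =>
          intro t
          have h2 := hDn (t + ((-(i:ℤ)-1 : ℤ):ℝ) * n)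
          rw [show (t + ((-(i:ℤ)-1 : ℤ):ℝ) * n) + n = t + ((-(i:ℤ) : ℤ):ℝ) * n from by
            push_cast; ring] at h2
          rw [← ih t, ← h2]
    have hDg : ∀ t, D (t + G) = D t := by
      intro t
      have hbez : (G : ℤ) = k₀ * Nat.gcdA k₀ n + n * Nat.gcdB k₀ n := Nat.gcd_eq_gcd_ab k₀ n
      have hbezR : (G : ℝ) = (Nat.gcdA k₀ n : ℝ) * k₀ + (Nat.gcdB k₀ n : ℝ) * n := by
        have : ((G : ℤ) : ℝ) = ((k₀ * Nat.gcdA k₀ n + n * Nat.gcdB k₀ n : ℤ) : ℝ) := by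
          exact_mod_cast congrArg (fun z : ℤ => (z:ℝ)) hbez
        push_cast at this
        push_cast
        linarith
      rw [show t + (G:ℝ) = (t + (Nat.gcdB k₀ n : ℝ) * n) + (Nat.gcdA k₀ n : ℝ) * k₀ from by
        rw [hbezR]; ring]
      rw [hDkZ (Nat.gcdA k₀ n) (t + (Nat.gcdB k₀ n : ℝ) * n), hDnZ (Nat.gcdB k₀ n) t]
    -- small parameters
    set L' := d' - c with hL'def
    have hL'0 : 0 < L' := by simp only [hL'def]; linarith
    have hL'1 : L' ≤ 1 := by simp only [hL'def]; linarith
    have hGR1 : (1:ℝ) ≤ (G:ℝ) := by exact_mod_cast hG1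
    have hGRn : (G:ℝ) < (n:ℝ) := by exact_mod_cast hGn
    set ε := min L' ((n:ℝ) - G) / 2 with hεdef
    have hε0 : 0 < ε := by
      simp only [hεdef]
      have h1 : 0 < min L' ((n:ℝ) - G) := lt_min hL'0 (by linarith)
      linarith
    have hεL' : ε < L' := by
      simp only [hεdef]
      have := min_le_left L' ((n:ℝ) - G)
      linarith
    have hεg : ε + G < n := by
      simp only [hεdef]
      have := min_le_right L' ((n:ℝ) - G)
      linarith
    set σ := c + ε with hσdef
    have hQσ : Q σ = y σ := by
      have := hQF3 0 σ ⟨by push_cast; linarith, by push_cast; linarith⟩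
      simpa using this
    have hDσ : D σ ≠ 0 := by
      simp only [hDdef, hQσ]
      intro he
      exact hP3 σ (by simp only [hσdef]; linarith) (by simp only [hσdef, hL'def] at hεL' ⊢; linarith)
        (by linarith)
    have hQσ' : Q (σ + G) = y (σ + G) := by
      have := hQF3 0 (σ + G) ⟨by push_cast; linarith, by push_cast; simp only [hσdef]; linarith⟩
      simpa using this
    have hyσ' : y (σ + G) = Z (σ + G) := by
      apply hP2
      simp only [hσdef, hL'def] at *
      linarith
    have hDσ' : D (σ + G) = 0 := by
      simp only [hDdef, hQσ', hyσ']
      ring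
    rw [hDg σ] at hDσ'
    exact hDσ hDσ'
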